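/- For every integer k ≥ 4, the graph G_k constructed as follows contains no induced cycle of even length: take k disjoint copies F₁,…,F_k of the graph B_k (a triangle with a pendant path of length k attached to one triangle vertex, where the triangle of F_i has vertices a_i, b_i, c_i with a_i the attachment point, and r_i the pendant endpoint); for 2 ≤ i ≤ k, connect r_i to r_{i-1} by a path of length k and connect c_i to b_{i-1} by a path of length k+1. -/

import Mathlib

open SimpleGraph

/-- Raw vertex names for the even-hole-free construction `G_k`:
`b i`, `c i` are triangle vertices of the `i`-th copy of `B_k` (0-indexed),
`p i j` (for `0 ≤ j ≤ k`) are the vertices of the pendant path of the `i`-th copy, with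
`p i 0 = a_i` (the third triangle vertex) and `p i k = r_i`,
`rp i j` (for `0 ≤ j ≤ k-2`) are the internal vertices of the length-`k` path joining
`r_i` and `r_{i+1}`, and
`cb i j` (for `0 ≤ j ≤ k-1`) are the internal vertices of the length-`(k+1)` path joining
`c_{i+1}` and `b_i`. -/
inductive Raw : Type
  | b : ℕ → Raw
  | c : ℕ → Raw
  | p : ℕ → ℕ → Raw
  | rp : ℕ → ℕ → Raw
  | cb : ℕ → ℕ → Raw
deriving DecidableEq

/-- Validity of a raw vertex name for the construction with parameter `k`. -/
def Valid (k : ℕ) : Raw → Prop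
  | .b i => i < k
  | .c i => i < k
  | .p i j => i < k ∧ j ≤ k
  | .rp i j => i + 1 < k ∧ j + 1 < k
  | .cb i j => i + 1 < k ∧ j < k

/-- The vertex set of `G_k`. -/
def Vk (k : ℕ) : Type := {x : Raw // Valid k x}

/-- The base adjacency relation of `G_k` on raw vertex names (to be symmetrized). -/
def GkRel (k : ℕ) : Raw → Raw → Prop := fun x y =>
  (∃ i, x = .p i 0 ∧ y = .b i) ∨
  (∃ i, x = .p i 0 ∧ y = .c i) ∨
  (∃ i, x = .b i ∧ y = .c i) ∨
  (∃ i j, x = .p i j ∧ y = .p i (j + 1)) ∨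
  (∃ i, x = .p i k ∧ y = .rp i 0) ∨
  (∃ i j, x = .rp i j ∧ y = .rp i (j + 1)) ∨
  (∃ i, x = .rp i (k - 2) ∧ y = .p (i + 1) k) ∨
  (∃ i, x = .c (i + 1) ∧ y = .cb i 0) ∨
  (∃ i j, x = .cb i j ∧ y = .cb i (j + 1)) ∨
  (∃ i, x = .cb i (k - 1) ∧ y = .b i)

/-- The graph `G_k` of the even-hole-free construction: `k` copies of `B_k` (a triangle
`a_i b_i c_i` with a pendant path of length `k` from `a_i` ending at `r_i`), with `r_i`
joined to `r_{i+1}` by a path of length `k` and `c_{i+1}` joined to `b_i` by a path of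
length `k + 1`. -/
def Gk (k : ℕ) : SimpleGraph (Vk k) :=
  SimpleGraph.fromRel (fun x y => GkRel k x.val y.val)

/-- A cycle is induced (a hole, if of length at least 4) if it has no chords: every edge
of the graph between vertices of the cycle is an edge of the cycle. -/
def IsInducedCycle {V : Type*} (G : SimpleGraph V) {v : V} (cyc : G.Walk v v) : Prop :=
  cyc.IsCycle ∧ ∀ x ∈ cyc.support, ∀ y ∈ cyc.support, G.Adj x y → s(x, y) ∈ cyc.edges

/-- A walk is an isometric path if it is a path and its length equals the distance
between its end-vertices. -/
def IsometricPath {V : Type*} (G : SimpleGraph V) {u v : V} (p : G.Walk u v) : Prop :=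
  p.IsPath ∧ p.length = G.dist u v


-- ===== auxiliary development =====



namespace EHF

variable {V : Type*} {G : SimpleGraph V}

lemma path_start_nbr_unique {u v : V} {p : G.Walk u v} (hp : p.IsPath) {w x : V}
    (h1 : p.toSubgraph.Adj u w) (h2 : p.toSubgraph.Adj u x) : w = x := by
  cases p with
  | nil =>
    rw [Walk.toSubgraph] at h1
    simp at h1
  | @cons _ y _ h q =>
    rw [Walk.toSubgraph] at h1 h2
    have hq : u ∉ q.support := by
      have := hp.support_nodup
      simp only [Walk.support_cons, List.nodup_cons] at this
      exact this.1
    have key : ∀ z, (G.subgraphOfAdj h ⊔ q.toSubgraph).Adj u z → z = y := by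
      intro z hz
      rw [Subgraph.sup_adj] at hz
      rcases hz with hz | hz
      · rw [subgraphOfAdj_adj] at hz
        rcases Sym2.eq_iff.mp hz with ⟨-, rfl⟩ | ⟨rfl, h'⟩
        · rfl
        · exact (G.loopless.irrefl _ (h' ▸ h)).elim
      · exact absurd ((Walk.mem_verts_toSubgraph q).mp (q.toSubgraph.edge_vert hz)) hq
    rw [key w h1, key x h2]

/-- Every vertex on a cycle has exactly two neighbours in the cycle's subgraph. -/
lemma cycle_two_nbrs [DecidableEq V] {v x : V} {C : G.Walk v v} (hC : C.IsCycle)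
    (hx : x ∈ C.support) :
    ∃ y z, y ≠ z ∧ C.toSubgraph.Adj x y ∧ C.toSubgraph.Adj x z ∧
      ∀ w, C.toSubgraph.Adj x w → w = y ∨ w = z := by
  have hrot := C.toSubgraph_rotate hx
  set C' := C.rotate x hx with hC'def
  have hC' : C'.IsCycle := hC.rotate hx
  rw [← hrot]
  clear_value C'
  clear hrot hC hC'def hx C
  cases C' with
  | nil => exact absurd rfl hC'.ne_nil
  | @cons _ y _ h q =>
    have hqpath : q.IsPath := by
      rw [Walk.isPath_def]
      have := hC'.support_nodup
      simpa using this
    have hqnil : ¬ q.reverse.Nil := by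
      rw [Walk.not_nil_iff_lt_length, Walk.length_reverse]
      have h3 := hC'.three_le_length
      rw [Walk.length_cons] at h3
      omega
    obtain ⟨z, hz, q2, hq2⟩ := Walk.not_nil_iff.mp hqnil
    have hqr : q.reverse.IsPath := hqpath.reverse
    have hadjz' : q.reverse.toSubgraph.Adj x z := by
      rw [hq2, Walk.toSubgraph, Subgraph.sup_adj]
      exact Or.inl rfl
    have hadjz : q.toSubgraph.Adj x z := by rwa [q.toSubgraph_reverse] at hadjz'
    have huniq : ∀ w, q.toSubgraph.Adj x w → w = z := by
      intro w hw
      rw [← q.toSubgraph_reverse] at hw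
      exact path_start_nbr_unique hqr hw hadjz'
    have hmemz : s(x, z) ∈ q.edges := by
      have : s(x, z) ∈ q.reverse.edges := by
        rw [hq2, Walk.edges_cons]
        exact List.mem_cons_self
      rwa [Walk.edges_reverse, List.mem_reverse] at this
    refine ⟨y, z, ?_, ?_, ?_, ?_⟩
    · rintro rfl
      have hnd := hC'.edges_nodup
      rw [Walk.edges_cons, List.nodup_cons] at hnd
      exact hnd.1 hmemz
    · rw [Walk.toSubgraph, Subgraph.sup_adj]
      exact Or.inl rfl
    · rw [Walk.toSubgraph, Subgraph.sup_adj]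
      exact Or.inr hadjz
    · intro w hw
      rw [Walk.toSubgraph, Subgraph.sup_adj] at hw
      rcases hw with hw | hw
      · rw [subgraphOfAdj_adj] at hw
        rcases Sym2.eq_iff.mp hw with ⟨-, rfl⟩ | ⟨rfl, h'⟩
        · exact Or.inl rfl
        · exact (G.loopless.irrefl _ (h' ▸ h)).elim
      · exact Or.inr (huniq w hw)

/-- An invariant that propagates along edges of a connected subgraph holds everywhere. -/
lemma subgraph_invariant {H : G.Subgraph} (hconn : H.Connected) (P : V → Prop)
    (hstep : ∀ x y, H.Adj x y → P x → P y) {x y : V} (hx : x ∈ H.verts)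
    (hy : y ∈ H.verts) (hPx : P x) : P y := by
  suffices h : ∀ (a b : H.verts), H.coe.Reachable a b → P a.1 → P b.1 by
    exact h ⟨x, hx⟩ ⟨y, hy⟩ (hconn ⟨x, hx⟩ ⟨y, hy⟩) hPx
  rintro a b ⟨W⟩
  induction W with
  | nil => exact id
  | @cons a b c ha _ ih => exact fun hPa => ih (hstep a.1 b.1 ha hPa)

end EHF

namespace EHF

instance {k : ℕ} : DecidableEq (Vk k) := fun a b =>
  decidable_of_iff (a.1 = b.1) Subtype.ext_iff.symm

/-- Raw-level adjacency. -/
def AdjR (k : ℕ) (x y : Raw) : Prop := x ≠ y ∧ (GkRel k x y ∨ GkRel k y x)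

lemma AdjR.symm {k : ℕ} {x y : Raw} (h : AdjR k x y) : AdjR k y x :=
  ⟨Ne.symm h.1, h.2.symm⟩

lemma gk_adj {k : ℕ} {x y : Vk k} : (Gk k).Adj x y ↔ AdjR k x.1 y.1 := by
  rw [Gk, fromRel_adj, AdjR]
  constructor
  · rintro ⟨h1, h2⟩
    exact ⟨fun h => h1 (Subtype.ext h), h2⟩
  · rintro ⟨h1, h2⟩
    exact ⟨fun h => h1 (by rw [h]), h2⟩

variable {k : ℕ} {v : Vk k}

/-- x is a support vertex of the cycle (raw-level). -/
def SS (C : (Gk k).Walk v v) (x : Raw) : Prop :=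
  ∃ h : Valid k x, ⟨x, h⟩ ∈ C.support

/-- s(x,y) is an edge of the cycle (raw-level). -/
def EE (C : (Gk k).Walk v v) (x y : Raw) : Prop :=
  ∃ (hx : Valid k x) (hy : Valid k y), C.toSubgraph.Adj ⟨x, hx⟩ ⟨y, hy⟩

variable {C : (Gk k).Walk v v}

lemma EE.symm {x y : Raw} (h : EE C x y) : EE C y x := by
  obtain ⟨hx, hy, h⟩ := h
  exact ⟨hy, hx, h.symm⟩

lemma EE.valid_left {x y : Raw} (h : EE C x y) : Valid k x := h.1
lemma EE.valid_right {x y : Raw} (h : EE C x y) : Valid k y := h.2.1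

lemma EE.adjR {x y : Raw} (h : EE C x y) : AdjR k x y := by
  obtain ⟨hx, hy, h⟩ := h
  exact gk_adj.mp (C.toSubgraph.adj_sub h)

lemma EE.ss_left {x y : Raw} (h : EE C x y) : SS C x := by
  obtain ⟨hx, hy, h⟩ := h
  exact ⟨hx, (Walk.mem_verts_toSubgraph C).mp (C.toSubgraph.edge_vert h)⟩

lemma EE.ss_right {x y : Raw} (h : EE C x y) : SS C y := h.symm.ss_left

lemma SS.valid {x : Raw} (h : SS C x) : Valid k x := h.1

lemma subtype_eq_iff {x y : Raw} {hx : Valid k x} {hy : Valid k y} :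
    (⟨x, hx⟩ : Vk k) = ⟨y, hy⟩ ↔ x = y := by
  constructor
  · intro h; exact congrArg Subtype.val h
  · intro h; exact Subtype.ext h

section Cycle
variable (hC : IsInducedCycle (Gk k) C)
include hC

lemma induced_EE {x y : Raw} (hx : SS C x) (hy : SS C y) (h : AdjR k x y) : EE C x y := by
  obtain ⟨hxv, hxs⟩ := hx
  obtain ⟨hyv, hys⟩ := hy
  have hadj : (Gk k).Adj ⟨x, hxv⟩ ⟨y, hyv⟩ := gk_adj.mpr h
  have := hC.2 _ hxs _ hys hadj
  refine ⟨hxv, hyv, ?_⟩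
  exact (Subgraph.mem_edgeSet).mp ((Walk.mem_edges_toSubgraph C).mpr this)

lemma two_nbrs {x : Raw} (hx : SS C x) :
    ∃ y z : Raw, y ≠ z ∧ EE C x y ∧ EE C x z ∧ ∀ w, EE C x w → w = y ∨ w = z := by
  obtain ⟨hxv, hxs⟩ := hx
  obtain ⟨yv, zv, hne, h1, h2, h3⟩ := cycle_two_nbrs hC.1 hxs
  refine ⟨yv.1, zv.1, fun h => hne (Subtype.ext h), ⟨hxv, yv.2, by exact h1⟩,
    ⟨hxv, zv.2, by exact h2⟩, ?_⟩
  intro w ⟨hw1, hw2, hw3⟩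
  have hw3' : C.toSubgraph.Adj ⟨x, hxv⟩ ⟨w, hw2⟩ := by
    convert hw3 using 2
  rcases h3 _ hw3' with h | h
  · exact Or.inl (by rw [← h])
  · exact Or.inr (by rw [← h])

lemma three_nbrs_false {x y z w : Raw} (h1 : EE C x y) (h2 : EE C x z) (h3 : EE C x w)
    (h12 : y ≠ z) (h13 : y ≠ w) (h23 : z ≠ w) : False := by
  obtain ⟨a, b, hab, _, _, hall⟩ := two_nbrs hC h1.ss_left
  rcases hall _ h1 with rfl | rfl <;> rcases hall _ h2 with rfl | rfl <;>
    rcases hall _ h3 with rfl | rfl <;> simp_all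

lemma force2 {x u u' : Raw} (hx : SS C x) (henum : ∀ w, EE C x w → w = u ∨ w = u')
    (hne : u ≠ u') : EE C x u ∧ EE C x u' := by
  obtain ⟨a, b, hab, ha, hb, hall⟩ := two_nbrs hC hx
  rcases henum _ ha with rfl | rfl <;> rcases henum _ hb with rfl | rfl <;>
    first | simp_all | exact ⟨ha, hb⟩ | exact ⟨hb, ha⟩

end Cycle
end EHF


namespace EHF


variable {k : ℕ} {v : Vk k} {C : (Gk k).Walk v v}

lemma Nb (hk : 4 ≤ k) {i : ℕ} {w : Raw} (h : EE C (.b i) w) :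
    w = .p i 0 ∨ w = .c i ∨ w = .cb i (k - 1) := by
  have hval := h.valid_right
  have hvx := h.valid_left
  obtain ⟨hne, hrel | hrel⟩ := h.adjR
  all_goals (simp only [GkRel] at hrel; rcases hrel with ⟨i',h1,h2⟩|⟨i',h1,h2⟩|⟨i',h1,h2⟩|⟨i',j',h1,h2⟩|⟨i',h1,h2⟩|⟨i',j',h1,h2⟩|⟨i',h1,h2⟩|⟨i',h1,h2⟩|⟨i',j',h1,h2⟩|⟨i',h1,h2⟩)
  all_goals simp_all [Valid]
  all_goals omega

lemma Nc (hk : 4 ≤ k) {i : ℕ} {w : Raw} (h : EE C (.c i) w) :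
    w = .p i 0 ∨ w = .b i ∨ (0 < i ∧ w = .cb (i - 1) 0) := by
  have hval := h.valid_right
  have hvx := h.valid_left
  obtain ⟨hne, hrel | hrel⟩ := h.adjR
  all_goals (simp only [GkRel] at hrel; rcases hrel with ⟨i',h1,h2⟩|⟨i',h1,h2⟩|⟨i',h1,h2⟩|⟨i',j',h1,h2⟩|⟨i',h1,h2⟩|⟨i',j',h1,h2⟩|⟨i',h1,h2⟩|⟨i',h1,h2⟩|⟨i',j',h1,h2⟩|⟨i',h1,h2⟩)
  all_goals simp_all [Valid]
  all_goals omega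

lemma Np0 (hk : 4 ≤ k) {i : ℕ} {w : Raw} (h : EE C (.p i 0) w) :
    w = .b i ∨ w = .c i ∨ w = .p i 1 := by
  have hval := h.valid_right
  have hvx := h.valid_left
  obtain ⟨hne, hrel | hrel⟩ := h.adjR
  all_goals (simp only [GkRel] at hrel; rcases hrel with ⟨i',h1,h2⟩|⟨i',h1,h2⟩|⟨i',h1,h2⟩|⟨i',j',h1,h2⟩|⟨i',h1,h2⟩|⟨i',j',h1,h2⟩|⟨i',h1,h2⟩|⟨i',h1,h2⟩|⟨i',j',h1,h2⟩|⟨i',h1,h2⟩)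
  all_goals simp_all [Valid]
  all_goals omega

lemma Npmid (hk : 4 ≤ k) {i j : ℕ} (hj1 : 1 ≤ j) (hj2 : j < k) {w : Raw}
    (h : EE C (.p i j) w) : w = .p i (j - 1) ∨ w = .p i (j + 1) := by
  have hval := h.valid_right
  have hvx := h.valid_left
  obtain ⟨hne, hrel | hrel⟩ := h.adjR
  all_goals (simp only [GkRel] at hrel; rcases hrel with ⟨i',h1,h2⟩|⟨i',h1,h2⟩|⟨i',h1,h2⟩|⟨i',j',h1,h2⟩|⟨i',h1,h2⟩|⟨i',j',h1,h2⟩|⟨i',h1,h2⟩|⟨i',h1,h2⟩|⟨i',j',h1,h2⟩|⟨i',h1,h2⟩)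
  all_goals simp_all [Valid]
  all_goals omega

lemma Npk (hk : 4 ≤ k) {i : ℕ} {w : Raw} (h : EE C (.p i k) w) :
    w = .p i (k - 1) ∨ w = .rp i 0 ∨ (0 < i ∧ w = .rp (i - 1) (k - 2)) := by
  have hval := h.valid_right
  have hvx := h.valid_left
  obtain ⟨hne, hrel | hrel⟩ := h.adjR
  all_goals (simp only [GkRel] at hrel; rcases hrel with ⟨i',h1,h2⟩|⟨i',h1,h2⟩|⟨i',h1,h2⟩|⟨i',j',h1,h2⟩|⟨i',h1,h2⟩|⟨i',j',h1,h2⟩|⟨i',h1,h2⟩|⟨i',h1,h2⟩|⟨i',j',h1,h2⟩|⟨i',h1,h2⟩)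
  all_goals simp_all [Valid]
  all_goals omega

lemma Nrp (hk : 4 ≤ k) {i j : ℕ} {w : Raw} (h : EE C (.rp i j) w) :
    (j = 0 ∧ w = .p i k) ∨ (0 < j ∧ w = .rp i (j - 1)) ∨
    (j = k - 2 ∧ w = .p (i + 1) k) ∨ (j < k - 2 ∧ w = .rp i (j + 1)) := by
  have hval := h.valid_right
  have hvx := h.valid_left
  obtain ⟨hne, hrel | hrel⟩ := h.adjR
  all_goals (simp only [GkRel] at hrel; rcases hrel with ⟨i',h1,h2⟩|⟨i',h1,h2⟩|⟨i',h1,h2⟩|⟨i',j',h1,h2⟩|⟨i',h1,h2⟩|⟨i',j',h1,h2⟩|⟨i',h1,h2⟩|⟨i',h1,h2⟩|⟨i',j',h1,h2⟩|⟨i',h1,h2⟩)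
  all_goals simp_all [Valid]
  all_goals omega

lemma Ncb (hk : 4 ≤ k) {i j : ℕ} {w : Raw} (h : EE C (.cb i j) w) :
    (j = 0 ∧ w = .c (i + 1)) ∨ (0 < j ∧ w = .cb i (j - 1)) ∨
    (j = k - 1 ∧ w = .b i) ∨ (j < k - 1 ∧ w = .cb i (j + 1)) := by
  have hval := h.valid_right
  have hvx := h.valid_left
  obtain ⟨hne, hrel | hrel⟩ := h.adjR
  all_goals (simp only [GkRel] at hrel; rcases hrel with ⟨i',h1,h2⟩|⟨i',h1,h2⟩|⟨i',h1,h2⟩|⟨i',j',h1,h2⟩|⟨i',h1,h2⟩|⟨i',j',h1,h2⟩|⟨i',h1,h2⟩|⟨i',h1,h2⟩|⟨i',j',h1,h2⟩|⟨i',h1,h2⟩)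
  all_goals simp_all [Valid]
  all_goals omega

end EHF


namespace EHF

variable {k : ℕ} {v : Vk k} {C : (Gk k).Walk v v}

section Prop1
variable (hC : IsInducedCycle (Gk k) C) (hk : 4 ≤ k)
include hC hk

lemma cb_step {i j : ℕ} (hx : SS C (.cb i j)) (hj : j < k - 1) :
    EE C (.cb i j) (.cb i (j + 1)) ∧
      (j = 0 → EE C (.cb i j) (.c (i + 1))) ∧ (0 < j → EE C (.cb i j) (.cb i (j - 1))) := by
  rcases Nat.eq_zero_or_pos j with rfl | hj0
  · have henum : ∀ w, EE C (.cb i 0) w → w = .c (i + 1) ∨ w = .cb i 1 := by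
      intro w hw
      rcases Ncb hk hw with ⟨_, rfl⟩ | ⟨h0, _⟩ | ⟨h0, _⟩ | ⟨_, rfl⟩
      · exact Or.inl rfl
      · omega
      · omega
      · exact Or.inr rfl
    obtain ⟨h1, h2⟩ := force2 hC hx henum (by simp)
    exact ⟨h2, fun _ => h1, fun h => by omega⟩
  · have henum : ∀ w, EE C (.cb i j) w → w = .cb i (j - 1) ∨ w = .cb i (j + 1) := by
      intro w hw
      rcases Ncb hk hw with ⟨h0, _⟩ | ⟨_, rfl⟩ | ⟨h0, _⟩ | ⟨_, rfl⟩
      · omega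
      · exact Or.inl rfl
      · omega
      · exact Or.inr rfl
    obtain ⟨h1, h2⟩ := force2 hC hx henum
      (by intro hh; injection hh with _ h2'; omega)
    exact ⟨h2, fun h => by omega, fun _ => h1⟩

lemma cb_top {i : ℕ} (hx : SS C (.cb i (k - 1))) :
    EE C (.cb i (k - 1)) (.b i) ∧ EE C (.cb i (k - 1)) (.cb i (k - 2)) := by
  have henum : ∀ w, EE C (.cb i (k - 1)) w → w = .cb i (k - 2) ∨ w = .b i := by
    intro w hw
    rcases Ncb hk hw with ⟨h0, _⟩ | ⟨_, hww⟩ | ⟨_, rfl⟩ | ⟨h0, _⟩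
    · omega
    · have he : k - 1 - 1 = k - 2 := by omega
      rw [hww, he]
      exact Or.inl rfl
    · exact Or.inr rfl
    · omega
  have := force2 hC hx henum (by simp)
  exact ⟨this.2, this.1⟩

lemma cb_stepdown {i j : ℕ} (hx : SS C (.cb i j)) (hj : 0 < j) (hj2 : j ≤ k - 1) :
    EE C (.cb i j) (.cb i (j - 1)) := by
  rcases eq_or_lt_of_le hj2 with rfl | hlt
  · have he : k - 1 - 1 = k - 2 := by omega
    rw [he]
    exact (cb_top hC hk hx).2
  · exact (cb_step hC hk hx hlt).2.2 hj

/-- Any vertex of a `cb`-path on the cycle forces the whole path, in particular both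
end edges. -/
lemma Pcb {i j : ℕ} (hx : SS C (.cb i j)) :
    EE C (.cb i (k - 1)) (.b i) ∧ EE C (.cb i 0) (.c (i + 1)) := by
  have hval := hx.valid
  rw [Valid] at hval
  constructor
  · have : ∀ d jj, jj + d = k - 1 → SS C (.cb i jj) → EE C (.cb i (k - 1)) (.b i) := by
      intro d
      induction d with
      | zero => intro jj hjj hss
                have he : jj = k - 1 := by omega
                exact (cb_top hC hk (he ▸ hss)).1
      | succ n ih =>
        intro jj hjj hss
        have hstep := (cb_step hC hk hss (by omega)).1
        exact ih (jj + 1) (by omega) hstep.ss_right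
    exact this (k - 1 - j) j (by omega) hx
  · have : ∀ d jj, jj = d → jj ≤ k - 1 → SS C (.cb i jj) → EE C (.cb i 0) (.c (i + 1)) := by
      intro d
      induction d with
      | zero => intro jj hjj _ hss
                subst hjj
                exact (cb_step hC hk hss (by omega)).2.1 rfl
      | succ n ih =>
        intro jj hjj hle hss
        have hstep := cb_stepdown hC hk hss (by omega) hle
        exact ih (jj - 1) (by omega) (by omega) hstep.ss_right
    exact this j j rfl (by omega) hx
end Prop1
end EHF

namespace EHF
variable {k : ℕ} {v : Vk k} {C : (Gk k).Walk v v}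
section Prop2
variable (hC : IsInducedCycle (Gk k) C) (hk : 4 ≤ k)
include hC hk

lemma rp_step {i j : ℕ} (hx : SS C (.rp i j)) :
    (j = 0 → EE C (.rp i j) (.p i k)) ∧ (0 < j → EE C (.rp i j) (.rp i (j - 1))) ∧
    (j = k - 2 → EE C (.rp i j) (.p (i + 1) k)) ∧ (j < k - 2 → EE C (.rp i j) (.rp i (j + 1))) := by
  have hval := hx.valid
  rw [Valid] at hval
  have hlo : j = 0 ∨ 0 < j := by omega
  have hhi : j = k - 2 ∨ j < k - 2 := by omega
  rcases hlo with rfl | hlo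
  · rcases hhi with hhi | hhi
    · omega
    · have henum : ∀ w, EE C (.rp i 0) w → w = .p i k ∨ w = .rp i 1 := by
        intro w hw
        rcases Nrp hk hw with ⟨_, rfl⟩ | ⟨h0, _⟩ | ⟨h0, _⟩ | ⟨_, rfl⟩
        · exact Or.inl rfl
        · omega
        · omega
        · exact Or.inr rfl
      obtain ⟨h1, h2⟩ := force2 hC hx henum (by simp)
      exact ⟨fun _ => h1, fun h => by omega, fun h => by omega, fun _ => h2⟩
  · rcases hhi with rfl | hhi
    · have henum : ∀ w, EE C (.rp i (k - 2)) w → w = .rp i (k - 3) ∨ w = .p (i + 1) k := by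
        intro w hw
        rcases Nrp hk hw with ⟨h0, _⟩ | ⟨_, hww⟩ | ⟨_, rfl⟩ | ⟨h0, _⟩
        · omega
        · have he : k - 2 - 1 = k - 3 := by omega
          rw [hww, he]
          exact Or.inl rfl
        · exact Or.inr rfl
        · omega
      obtain ⟨h1, h2⟩ := force2 hC hx henum (by simp)
      have he : k - 2 - 1 = k - 3 := by omega
      exact ⟨fun h => by omega, fun _ => by rw [he]; exact h1, fun _ => h2, fun h => by omega⟩
    · have henum : ∀ w, EE C (.rp i j) w → w = .rp i (j - 1) ∨ w = .rp i (j + 1) := by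
        intro w hw
        rcases Nrp hk hw with ⟨h0, _⟩ | ⟨_, rfl⟩ | ⟨h0, _⟩ | ⟨_, rfl⟩
        · omega
        · exact Or.inl rfl
        · omega
        · exact Or.inr rfl
      obtain ⟨h1, h2⟩ := force2 hC hx henum (by intro hh; injection hh with _ h2'; omega)
      exact ⟨fun h => by omega, fun _ => h1, fun h => by omega, fun _ => h2⟩

/-- Any vertex of an `rp`-path on the cycle forces the whole path, in particular both
end edges. -/
lemma Prp {i j : ℕ} (hx : SS C (.rp i j)) :
    EE C (.rp i 0) (.p i k) ∧ EE C (.rp i (k - 2)) (.p (i + 1) k) := by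
  have hval := hx.valid
  rw [Valid] at hval
  constructor
  · have : ∀ d jj, jj = d → jj + 1 < k → SS C (.rp i jj) → EE C (.rp i 0) (.p i k) := by
      intro d
      induction d with
      | zero => intro jj hjj _ hss
                subst hjj
                exact (rp_step hC hk hss).1 rfl
      | succ n ih =>
        intro jj hjj hle hss
        have hstep := (rp_step hC hk hss).2.1 (by omega)
        exact ih (jj - 1) (by omega) (by omega) hstep.ss_right
    exact this j j rfl (by omega) hx
  · have : ∀ d jj, jj + d = k - 2 → SS C (.rp i jj) → EE C (.rp i (k - 2)) (.p (i + 1) k) := by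
      intro d
      induction d with
      | zero => intro jj hjj hss
                have he : jj = k - 2 := by omega
                subst he
                exact (rp_step hC hk hss).2.2.1 (by omega)
      | succ n ih =>
        intro jj hjj hss
        have hstep := (rp_step hC hk hss).2.2.2 (by omega)
        exact ih (jj + 1) (by omega) hstep.ss_right
    exact this (k - 2 - j) j (by omega) hx

lemma p_step {i j : ℕ} (hx : SS C (.p i j)) (hj1 : 1 ≤ j) (hj2 : j ≤ k - 1) :
    EE C (.p i j) (.p i (j - 1)) ∧ EE C (.p i j) (.p i (j + 1)) := by
  have henum : ∀ w, EE C (.p i j) w → w = .p i (j - 1) ∨ w = .p i (j + 1) := by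
    intro w hw
    rcases Npmid hk hj1 (by omega) hw with rfl | rfl
    · exact Or.inl rfl
    · exact Or.inr rfl
  exact force2 hC hx henum (by intro hh; injection hh with _ h2'; omega)

/-- Any interior vertex of a pendant path on the cycle forces the whole pendant path,
in particular both end edges. -/
lemma Pp {i j : ℕ} (hx : SS C (.p i j)) (hj1 : 1 ≤ j) (hj2 : j ≤ k - 1) :
    EE C (.p i 1) (.p i 0) ∧ EE C (.p i (k - 1)) (.p i k) := by
  constructor
  · have : ∀ d jj, jj = d → 1 ≤ jj → jj ≤ k - 1 → SS C (.p i jj) → EE C (.p i 1) (.p i 0) := by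
      intro d
      induction d with
      | zero => intro jj hjj h1 _ _; omega
      | succ n ih =>
        intro jj hjj h1 h2 hss
        rcases Nat.eq_or_lt_of_le h1 with he | hgt
        · have hst := (p_step hC hk hss h1 h2).1
          rw [← he] at hst
          simpa using hst
        · have hst := (p_step hC hk hss h1 h2).1
          exact ih (jj - 1) (by omega) (by omega) (by omega) hst.ss_right
    exact this j j rfl hj1 hj2 hx
  · have : ∀ d jj, jj + d = k - 1 → 1 ≤ jj → SS C (.p i jj) → EE C (.p i (k - 1)) (.p i k) := by
      intro d
      induction d with
      | zero => intro jj hjj _ hss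
                have he : jj = k - 1 := by omega
                subst he
                have hst := (p_step hC hk hss (by omega) (le_refl _)).2
                have he2 : k - 1 + 1 = k := by omega
                rwa [he2] at hst
      | succ n ih =>
        intro jj hjj h1 hss
        have hst := (p_step hC hk hss h1 (by omega)).2
        exact ih (jj + 1) (by omega) (by omega) hst.ss_right
    exact this (k - 1 - j) j (by omega) hj1 hx
end Prop2
end EHF


namespace EHF

variable {k : ℕ} {v : Vk k} {C : (Gk k).Walk v v}

/-- "no triangle copy fully on the cycle" -/
def NT (C : (Gk k).Walk v v) : Prop :=
  ∀ i, ¬(SS C (.p i 0) ∧ SS C (.b i) ∧ SS C (.c i))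

/-- top junction at copy `T` -/
def TopJ (C : (Gk k).Walk v v) (T : ℕ) : Prop :=
  EE C (.p T 0) (.c T) ∧ EE C (.p T 0) (.p T 1) ∧ ¬ SS C (.b T)

section Junction
variable (hC : IsInducedCycle (Gk k) C) (hk : 4 ≤ k) (hnt : NT C)
include hC hk hnt

lemma Jb {i : ℕ} (hx : SS C (.b i)) :
    i + 1 < k ∧ EE C (.b i) (.cb i (k - 1)) ∧ SS C (.c (i + 1)) ∧
      (EE C (.b i) (.p i 0) ∨ EE C (.b i) (.c i)) := by
  obtain ⟨y, z, hyz, hy, hz, hall⟩ := two_nbrs hC hx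
  have hycases := Nb hk hy
  have hzcases := Nb hk hz
  have hcb : EE C (.b i) (.cb i (k - 1)) ∧ (EE C (.b i) (.p i 0) ∨ EE C (.b i) (.c i)) := by
    rcases hycases with rfl | rfl | rfl <;> rcases hzcases with rfl | rfl | rfl
    · exact absurd rfl hyz
    · exact absurd ⟨hy.ss_right, hx, hz.ss_right⟩ (hnt i)
    · exact ⟨hz, Or.inl hy⟩
    · exact absurd ⟨hz.ss_right, hx, hy.ss_right⟩ (hnt i)
    · exact absurd rfl hyz
    · exact ⟨hz, Or.inr hy⟩
    · exact ⟨hy, Or.inl hz⟩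
    · exact ⟨hy, Or.inr hz⟩
    · exact absurd rfl hyz
  have hvalid := hcb.1.valid_right
  rw [Valid] at hvalid
  refine ⟨hvalid.1, hcb.1, ?_, hcb.2⟩
  exact (Pcb hC hk hcb.1.ss_right).2.ss_right

lemma Jc {i : ℕ} (hx : SS C (.c i)) :
    0 < i ∧ EE C (.c i) (.cb (i - 1) 0) ∧ SS C (.b (i - 1)) ∧
      (EE C (.c i) (.p i 0) ∨ EE C (.c i) (.b i)) := by
  obtain ⟨y, z, hyz, hy, hz, hall⟩ := two_nbrs hC hx
  have hycases := Nc hk hy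
  have hzcases := Nc hk hz
  have hcb : 0 < i ∧ EE C (.c i) (.cb (i - 1) 0) ∧
      (EE C (.c i) (.p i 0) ∨ EE C (.c i) (.b i)) := by
    rcases hycases with rfl | rfl | ⟨hi, rfl⟩ <;> rcases hzcases with rfl | rfl | ⟨hi2, rfl⟩
    · exact absurd rfl hyz
    · exact absurd ⟨hy.ss_right, hz.ss_right, hx⟩ (hnt i)
    · exact ⟨hi2, hz, Or.inl hy⟩
    · exact absurd ⟨hz.ss_right, hy.ss_right, hx⟩ (hnt i)
    · exact absurd rfl hyz
    · exact ⟨hi2, hz, Or.inr hy⟩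
    · exact ⟨hi, hy, Or.inl hz⟩
    · exact ⟨hi, hy, Or.inr hz⟩
    · exact absurd rfl hyz
  refine ⟨hcb.1, hcb.2.1, ?_, hcb.2.2⟩
  exact (Pcb hC hk hcb.2.1.ss_right).1.ss_right

lemma Ja {i : ℕ} (hx : SS C (.p i 0)) :
    EE C (.p i 0) (.p i 1) ∧ (EE C (.p i 0) (.b i) ∨ EE C (.p i 0) (.c i)) ∧
      EE C (.p i (k - 1)) (.p i k) := by
  obtain ⟨y, z, hyz, hy, hz, hall⟩ := two_nbrs hC hx
  have hycases := Np0 hk hy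
  have hzcases := Np0 hk hz
  have hp : EE C (.p i 0) (.p i 1) ∧ (EE C (.p i 0) (.b i) ∨ EE C (.p i 0) (.c i)) := by
    rcases hycases with rfl | rfl | rfl <;> rcases hzcases with rfl | rfl | rfl
    · exact absurd rfl hyz
    · exact absurd ⟨hx, hy.ss_right, hz.ss_right⟩ (hnt i)
    · exact ⟨hz, Or.inl hy⟩
    · exact absurd ⟨hx, hz.ss_right, hy.ss_right⟩ (hnt i)
    · exact absurd rfl hyz
    · exact ⟨hz, Or.inr hy⟩
    · exact ⟨hy, Or.inl hz⟩
    · exact ⟨hy, Or.inr hz⟩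
    · exact absurd rfl hyz
  refine ⟨hp.1, hp.2, ?_⟩
  exact (Pp hC hk hp.1.ss_right (le_refl _) (by omega)).2
end Junction

section Spine
variable (hC : IsInducedCycle (Gk k) C) (hk : 4 ≤ k)
include hC hk

lemma Jr {i : ℕ} (hx : SS C (.p i k)) :
    (EE C (.p i k) (.p i (k - 1)) ∧ EE C (.p i k) (.rp i 0)) ∨
    (EE C (.p i k) (.p i (k - 1)) ∧ 0 < i ∧ EE C (.p i k) (.rp (i - 1) (k - 2))) ∨
    (EE C (.p i k) (.rp i 0) ∧ 0 < i ∧ EE C (.p i k) (.rp (i - 1) (k - 2))) := by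
  obtain ⟨y, z, hyz, hy, hz, hall⟩ := two_nbrs hC hx
  have hycases := Npk hk hy
  have hzcases := Npk hk hz
  rcases hycases with rfl | rfl | ⟨hi, rfl⟩ <;> rcases hzcases with rfl | rfl | ⟨hi2, rfl⟩
  · exact absurd rfl hyz
  · exact Or.inl ⟨hy, hz⟩
  · exact Or.inr (Or.inl ⟨hy, hi2, hz⟩)
  · exact Or.inl ⟨hz, hy⟩
  · exact absurd rfl hyz
  · exact Or.inr (Or.inr ⟨hy, hi2, hz⟩)
  · exact Or.inr (Or.inl ⟨hz, hi, hy⟩)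
  · exact Or.inr (Or.inr ⟨hz, hi, hy⟩)
  · exact absurd rfl hyz
end Spine
end EHF

namespace EHF
variable {k : ℕ} {v : Vk k} {C : (Gk k).Walk v v}
section Valley
variable (hC : IsInducedCycle (Gk k) C) (hk : 4 ≤ k) (hnt : NT C)
include hC hk hnt

/-- Valley descent: a `c`-vertex on the cycle forces a bottom junction strictly below. -/
lemma VD : ∀ i, SS C (.c i) → ∃ l, l < i ∧ EE C (.p l 0) (.b l) := by
  intro i
  induction i using Nat.strong_induction_on with
  | _ i ih =>
    intro hx
    obtain ⟨hi, hcb, hb, -⟩ := Jc hC hk hnt hx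
    obtain ⟨-, -, -, hopt⟩ := Jb hC hk hnt hb
    rcases hopt with hp | hc
    · exact ⟨i - 1, by omega, hp.symm⟩
    · obtain ⟨l, hl, hll⟩ := ih (i - 1) (by omega) hc.ss_right
      exact ⟨l, by omega, hll⟩

/-- Valley ascent: a `b`-vertex on the cycle forces a top junction strictly above,
with pure valley copies in between. -/
lemma VC : ∀ d i, k ≤ i + d → SS C (.b i) →
    ∃ T, i < T ∧ T < k ∧ TopJ C T ∧
      ∀ l, i < l → l < T → (SS C (.b l) ∧ ¬ SS C (.p l 0)) := by
  intro d
  induction d with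
  | zero =>
    intro i hd hx
    have := hx.valid
    rw [Valid] at this
    omega
  | succ n ih =>
    intro i hd hx
    obtain ⟨hik, hbcb, hc1, -⟩ := Jb hC hk hnt hx
    obtain ⟨-, hccb, -, hopt⟩ := Jc hC hk hnt hc1
    have he1 : i + 1 - 1 = i := by omega
    rw [he1] at hccb
    rcases hopt with hp | hcbnext
    · -- top junction at i + 1
      have ha : SS C (.p (i + 1) 0) := hp.ss_right
      obtain ⟨hap1, hopt2, -⟩ := Ja hC hk hnt ha
      have hac : EE C (.p (i + 1) 0) (.c (i + 1)) := by
        rcases hopt2 with hab | hac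
        · exact absurd (three_nbrs_false hC hap1 hab hp.symm (by simp) (by simp) (by simp)) id
        · exact hac
      refine ⟨i + 1, by omega, hik, ⟨hac, hap1, ?_⟩, by omega⟩
      intro hbnext
      obtain ⟨-, hbcb2, -, hopt3⟩ := Jb hC hk hnt hbnext
      rcases hopt3 with hba | hbc
      · exact three_nbrs_false hC hap1 hac hba.symm (by simp) (by simp) (by simp)
      · exact three_nbrs_false hC hccb hp hbc.symm (by simp) (by simp) (by simp)
    · -- valley continues at i + 1
      have hbnext : SS C (.b (i + 1)) := hcbnext.ss_right
      obtain ⟨T, hT1, hT2, hT3, hT4⟩ := ih (i + 1) (by omega) hbnext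
      refine ⟨T, by omega, hT2, hT3, ?_⟩
      intro l hl1 hl2
      rcases Nat.lt_or_ge i.succ l with hcase | hcase
      · exact hT4 l hcase hl2
      · have hle : l = i + 1 := by omega
        subst hle
        refine ⟨hbnext, ?_⟩
        intro ha
        obtain ⟨hap1, hopt2, -⟩ := Ja hC hk hnt ha
        obtain ⟨-, hbcb2, -, -⟩ := Jb hC hk hnt hbnext
        rcases hopt2 with hab | hac
        · exact three_nbrs_false hC hbcb2 hcbnext.symm hab.symm (by simp) (by simp) (by simp)
        · exact three_nbrs_false hC hccb hcbnext hac.symm (by simp) (by simp) (by simp)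
end Valley
end EHF


namespace EHF

variable {k : ℕ} {v : Vk k} {C : (Gk k).Walk v v}
section Spine2
variable (hC : IsInducedCycle (Gk k) C) (hk : 4 ≤ k)
include hC hk

/-- from the pendant edge at `r_i`, the whole pendant is on the cycle. -/
lemma pend_to_a {i : ℕ} (h : EE C (.p i k) (.p i (k - 1))) : SS C (.p i 0) :=
  (Pp hC hk h.ss_right (by omega) (le_refl _)).1.ss_right

/-- Spine descent: a downward spine edge at `r_i` forces a pendant copy strictly
below. -/
lemma SD : ∀ i, 0 < i → SS C (.p i k) → EE C (.p i k) (.rp (i - 1) (k - 2)) →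
    ∃ j, j < i ∧ SS C (.p j 0) := by
  intro i
  induction i using Nat.strong_induction_on with
  | _ i ih =>
    intro hi hx hdown
    have hrp := Prp hC hk hdown.ss_right
    have hrprev : EE C (.p (i - 1) k) (.rp (i - 1) 0) := hrp.1.symm
    have hb : SS C (.p (i - 1) k) := hrprev.ss_left
    rcases Jr hC hk hb with ⟨hpend, -⟩ | ⟨hpend, -⟩ | ⟨hup, hii, hdown2⟩
    · exact ⟨i - 1, by omega, pend_to_a hC hk hpend⟩
    · exact ⟨i - 1, by omega, pend_to_a hC hk hpend⟩
    · obtain ⟨j, hj, hjj⟩ := ih (i - 1) (by omega) hii hb hdown2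
      exact ⟨j, by omega, hjj⟩

/-- Escape from the spine to some pendant copy. -/
lemma RU : ∀ d i, k ≤ i + d → SS C (.p i k) → ∃ l, SS C (.p l 0) := by
  intro d
  induction d with
  | zero =>
    intro i hd hx
    have := hx.valid
    rw [Valid] at this
    omega
  | succ n ih =>
    intro i hd hx
    rcases Jr hC hk hx with ⟨hpend, -⟩ | ⟨hpend, -⟩ | ⟨hup, -, -⟩
    · exact ⟨i, pend_to_a hC hk hpend⟩
    · exact ⟨i, pend_to_a hC hk hpend⟩
    · have hnext : SS C (.p (i + 1) k) := (Prp hC hk hup.ss_right).2.ss_right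
      exact ih (i + 1) (by omega) hnext
end Spine2

section Spine3
variable (hC : IsInducedCycle (Gk k) C) (hk : 4 ≤ k) (hnt : NT C)
include hC hk hnt

/-- Spine ascent: an upward spine edge at `r_i` forces a top spine end `T` above,
with pass-through copies in between (no pendant is used there). -/
lemma SU : ∀ d i, k ≤ i + d → SS C (.p i k) → EE C (.p i k) (.rp i 0) →
    ∃ T, i < T ∧ T < k ∧ SS C (.p T 0) ∧ EE C (.p T k) (.p T (k - 1)) ∧
      EE C (.p T k) (.rp (T - 1) (k - 2)) ∧ ∀ l, i < l → l < T → ¬ SS C (.p l 0) := by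
  intro d
  induction d with
  | zero =>
    intro i hd hx
    have := hx.valid
    rw [Valid] at this
    omega
  | succ n ih =>
    intro i hd hx hup
    have hval : i + 1 < k := by
      have := hup.valid_right
      rw [Valid] at this
      omega
    have hrp := Prp hC hk hup.ss_right
    have hxn : SS C (.p (i + 1) k) := hrp.2.ss_right
    have hdown : EE C (.p (i + 1) k) (.rp (i + 1 - 1) (k - 2)) := by
      have he : i + 1 - 1 = i := by omega
      rw [he]
      exact hrp.2.symm
    rcases Jr hC hk hxn with ⟨hpend, hup2⟩ | ⟨hpend, -, -⟩ | ⟨hup2, -, -⟩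
    · -- pend & up at i+1, but we also have down : three edges
      exfalso
      refine three_nbrs_false hC hpend hup2 hdown ?_ ?_ ?_
      · simp
      · simp
      · simp only [ne_eq, Raw.rp.injEq, not_and]
        omega
    · -- top at i + 1
      refine ⟨i + 1, by omega, hval, pend_to_a hC hk hpend, hpend, hdown, by omega⟩
    · -- pass-through at i + 1
      obtain ⟨T, hT1, hT2, hT3, hT4, hT5, hT6⟩ := ih (i + 1) (by omega) hxn hup2
      refine ⟨T, by omega, hT2, hT3, hT4, hT5, ?_⟩
      intro l hl1 hl2
      rcases Nat.lt_or_ge (i + 1) l with hcase | hcase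
      · exact hT6 l hcase hl2
      · have hle : l = i + 1 := by omega
        subst hle
        intro ha
        obtain ⟨-, -, hpendtop⟩ := Ja hC hk hnt ha
        refine three_nbrs_false hC hpendtop.symm hup2 hdown ?_ ?_ ?_
        · simp
        · simp
        · simp only [ne_eq, Raw.rp.injEq, not_and]
          omega
end Spine3
end EHF


namespace EHF

variable {k : ℕ} {v : Vk k} {C : (Gk k).Walk v v}

section Exist
variable (hC : IsInducedCycle (Gk k) C) (hk : 4 ≤ k) (hnt : NT C)
include hC hk hnt

lemma a_case {l : ℕ} (ha : SS C (.p l 0)) : ∃ i, EE C (.p i 0) (.b i) := by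
  obtain ⟨-, hopt, -⟩ := Ja hC hk hnt ha
  rcases hopt with hab | hac
  · exact ⟨l, hab⟩
  · obtain ⟨l', -, h⟩ := VD hC hk hnt l hac.ss_right
    exact ⟨l', h⟩

lemma ex_ab : ∃ i, EE C (.p i 0) (.b i) := by
  have hv : SS C v.1 := ⟨v.2, by exact C.start_mem_support⟩
  have hb_case : ∀ i, SS C (.b i) → ∃ i', EE C (.p i' 0) (.b i') := by
    intro i hb
    obtain ⟨-, -, hc, -⟩ := Jb hC hk hnt hb
    obtain ⟨l, -, h⟩ := VD hC hk hnt _ hc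
    exact ⟨l, h⟩
  have hr_case : ∀ i, SS C (.p i k) → ∃ i', EE C (.p i' 0) (.b i') := by
    intro i hr
    obtain ⟨l, hl⟩ := RU hC hk k i (by omega) hr
    exact a_case hC hk hnt hl
  cases hvv : v.1 with
  | b i =>
    rw [hvv] at hv
    exact hb_case i hv
  | c i =>
    rw [hvv] at hv
    obtain ⟨l, -, h⟩ := VD hC hk hnt i hv
    exact ⟨l, h⟩
  | p i j =>
    rw [hvv] at hv
    have hval := hv.valid
    rw [Valid] at hval
    rcases Nat.eq_zero_or_pos j with rfl | hj0
    · exact a_case hC hk hnt hv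
    · rcases Nat.lt_or_ge j k with hjk | hjk
      · exact a_case hC hk hnt (Pp hC hk hv hj0 (by omega)).1.ss_right
      · have hjeq : j = k := by omega
        subst hjeq
        exact hr_case i hv
  | rp i j =>
    rw [hvv] at hv
    exact hr_case i (Prp hC hk hv).1.ss_right
  | cb i j =>
    rw [hvv] at hv
    exact hb_case i (Pcb hC hk hv).1.ss_right
end Exist

/-- the "low" side of the cut between copies `T` and `T+1`. -/
def Low (T : ℕ) : Raw → Prop
  | .b l => l ≤ T
  | .c l => l ≤ T
  | .p l _ => l ≤ T
  | .rp l _ => l ≤ T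
  | .cb l _ => l < T

lemma low_step {T : ℕ} (hrp : ∀ jj, ¬ SS C (.rp T jj)) (hcb : ∀ jj, ¬ SS C (.cb T jj))
    {x y : Raw} (h : EE C x y) (hx : Low T x) : Low T y := by
  have hssx := h.ss_left
  have hssy := h.ss_right
  obtain ⟨hne, hrel | hrel⟩ := h.adjR <;>
    (simp only [GkRel] at hrel
     rcases hrel with ⟨i',h1,h2⟩|⟨i',h1,h2⟩|⟨i',h1,h2⟩|⟨i',j',h1,h2⟩|⟨i',h1,h2⟩|
       ⟨i',j',h1,h2⟩|⟨i',h1,h2⟩|⟨i',h1,h2⟩|⟨i',j',h1,h2⟩|⟨i',h1,h2⟩) <;>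
    subst h1 <;> subst h2 <;> simp only [Low] at hx ⊢ <;>
    first
      | omega
      | (rcases Nat.lt_or_ge i' T with hcs | hcs
         · omega
         · exfalso
           have hiT : i' = T := by omega
           subst hiT
           first | exact hrp _ hssx | exact hrp _ hssy | exact hcb _ hssx | exact hcb _ hssy)
end EHF

namespace EHF
variable {k : ℕ} {v : Vk k} {C : (Gk k).Walk v v}
section Uniq
variable (hC : IsInducedCycle (Gk k) C) (hk : 4 ≤ k) (hnt : NT C)
include hC hk hnt

/-- Minimality kills any pendant copy strictly below `i0`. -/
lemma no_a_below {i0 : ℕ} (hmin : ∀ l, EE C (.p l 0) (.b l) → i0 ≤ l)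
    {l : ℕ} (hl : l < i0) (ha : SS C (.p l 0)) : False := by
  obtain ⟨-, hopt, -⟩ := Ja hC hk hnt ha
  rcases hopt with hab | hac
  · exact absurd (hmin l hab) (by omega)
  · obtain ⟨l', hl', h⟩ := VD hC hk hnt l hac.ss_right
    exact absurd (hmin l' h) (by omega)

lemma uniq_ab {i0 j : ℕ} (h0 : EE C (.p i0 0) (.b i0))
    (hmin : ∀ l, EE C (.p l 0) (.b l) → i0 ≤ l)
    (hj : EE C (.p j 0) (.b j)) : j = i0 := by
  -- data at the bottom junction i0
  have hssa := h0.ss_left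
  have hssb := h0.ss_right
  obtain ⟨hap1, -, hpendtop⟩ := Ja hC hk hnt hssa
  have hr0 : SS C (.p i0 k) := hpendtop.ss_right
  have hpend0 : EE C (.p i0 k) (.p i0 (k - 1)) := hpendtop.symm
  -- spine must go up at i0
  have hup0 : EE C (.p i0 k) (.rp i0 0) := by
    rcases Jr hC hk hr0 with ⟨-, hup⟩ | ⟨-, hpos, hdown⟩ | ⟨hup, -, -⟩
    · exact hup
    · exfalso
      obtain ⟨l, hl, ha⟩ := SD hC hk i0 hpos hr0 hdown
      exact no_a_below hC hk hnt hmin hl ha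
    · exact hup
  -- spine ascent
  obtain ⟨T, hT1, hT2, hTa, hTpend, hTdown, hTmid⟩ :=
    SU hC hk hnt k i0 (by omega) hr0 hup0
  -- valley ascent
  obtain ⟨T', hT'1, hT'2, hT'top, hT'mid⟩ := VC hC hk hnt k i0 (by omega) hssb
  -- the two tops agree
  have hTT : T = T' := by
    rcases Nat.lt_trichotomy T T' with hlt | heq | hgt
    · exact absurd hTa (hT'mid T hT1 hlt).2
    · exact heq
    · exact absurd hT'top.1.ss_left (hTmid T' hT'1 hgt)
  subst hTT
  -- now place j
  have hj0 : i0 ≤ j := hmin j hj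
  rcases Nat.lt_trichotomy j T with hlt | heq | hgt
  · rcases Nat.eq_or_lt_of_le hj0 with heq0 | hgt0
    · omega
    · exact absurd hj.ss_left (hT'mid j hgt0 hlt).2
  · subst heq
    exact absurd hj.ss_right hT'top.2.2
  · -- cut argument
    exfalso
    -- r_T's two edges are pinned
    have hrpT : ∀ jj, ¬ SS C (.rp T jj) := by
      intro jj hss
      have hup := (Prp hC hk hss).1.symm
      refine three_nbrs_false hC hTpend hTdown hup ?_ ?_ ?_
      · simp
      · simp
      · simp only [ne_eq, Raw.rp.injEq, not_and]
        omega
    have hcbT : ∀ jj, ¬ SS C (.cb T jj) := by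
      intro jj hss
      exact hT'top.2.2 (Pcb hC hk hss).1.ss_right
    -- connectivity from a_{i0} (low) to a_j (high)
    obtain ⟨hva, hma⟩ := h0.ss_left
    obtain ⟨hvj, hmj⟩ := hj.ss_left
    have hstep : ∀ x y : Vk k, C.toSubgraph.Adj x y → Low T x.1 → Low T y.1 := by
      intro x y hadj hx
      exact low_step hrpT hcbT ⟨x.2, y.2, hadj⟩ hx
    have hja : Low T (Raw.p j 0) := by
      refine subgraph_invariant C.toSubgraph_connected (fun x : Vk k => Low T x.1) hstep
        (x := ⟨.p i0 0, hva⟩) (y := ⟨.p j 0, hvj⟩) ?_ ?_ ?_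
      · exact (Walk.mem_verts_toSubgraph C).mpr hma
      · exact (Walk.mem_verts_toSubgraph C).mpr hmj
      · simp only [Low]
        omega
    simp only [Low] at hja
    omega
end Uniq
end EHF


namespace EHF

variable {k : ℕ} {v : Vk k} {C : (Gk k).Walk v v}

section Triangle
variable (hC : IsInducedCycle (Gk k) C) (hk : 4 ≤ k)
include hC hk

lemma pin {x y z w : Raw} (h1 : EE C x y) (h2 : EE C x z) (hne : y ≠ z)
    (h3 : EE C x w) : w = y ∨ w = z := by
  obtain ⟨a', b', hab', ha', hb', hall⟩ := two_nbrs hC h1.ss_left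
  rcases hall _ h1 with rfl | rfl <;> rcases hall _ h2 with rfl | rfl <;>
    rcases hall _ h3 with rfl | rfl <;> simp_all

lemma triangle_case {i : ℕ} (ha : SS C (.p i 0)) (hb : SS C (.b i)) (hc : SS C (.c i)) :
    C.length = 3 := by
  have adj_ab : AdjR k (.p i 0) (.b i) := ⟨by simp, Or.inl (Or.inl ⟨i, rfl, rfl⟩)⟩
  have adj_ac : AdjR k (.p i 0) (.c i) := ⟨by simp, Or.inl (Or.inr (Or.inl ⟨i, rfl, rfl⟩))⟩
  have adj_bc : AdjR k (.b i) (.c i) := ⟨by simp, Or.inl (Or.inr (Or.inr (Or.inl ⟨i, rfl, rfl⟩)))⟩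
  have eab := induced_EE hC ha hb adj_ab
  have eac := induced_EE hC ha hc adj_ac
  have ebc := induced_EE hC hb hc adj_bc
  set P : Vk k → Prop := fun x => x.1 = .p i 0 ∨ x.1 = .b i ∨ x.1 = .c i with hP
  have hstep : ∀ x y : Vk k, C.toSubgraph.Adj x y → P x → P y := by
    intro x y hadj hx
    have he : EE C x.1 y.1 := ⟨x.2, y.2, hadj⟩
    rcases hx with h | h | h <;> rw [h] at he
    · rcases pin hC hk eab eac (by simp) he with h' | h'
      · exact Or.inr (Or.inl h')
      · exact Or.inr (Or.inr h')
    · rcases pin hC hk eab.symm ebc (by simp) he with h' | h'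
      · exact Or.inl h'
      · exact Or.inr (Or.inr h')
    · rcases pin hC hk eac.symm ebc.symm (by simp) he with h' | h'
      · exact Or.inl h'
      · exact Or.inr (Or.inl h')
  have hsub : ∀ xv : Vk k, xv ∈ C.support → P xv := by
    intro xv hxv
    refine subgraph_invariant C.toSubgraph_connected P hstep (x := ⟨.p i 0, ha.1⟩)
      (y := xv) ?_ ?_ ?_
    · exact (Walk.mem_verts_toSubgraph C).mpr ha.2
    · exact (Walk.mem_verts_toSubgraph C).mpr hxv
    · exact Or.inl rfl
  have h3le := hC.1.three_le_length
  have htail : C.support.tail.Nodup := hC.1.support_nodup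
  have hsubt : C.support.tail.toFinset ⊆
      {(⟨.p i 0, ha.1⟩ : Vk k), ⟨.b i, hb.1⟩, ⟨.c i, hc.1⟩} := by
    intro x hx
    rw [List.mem_toFinset] at hx
    have hxs : x ∈ C.support := List.mem_of_mem_tail hx
    rcases hsub x hxs with h | h | h
    · exact Finset.mem_insert.mpr (Or.inl (Subtype.ext h))
    · exact Finset.mem_insert.mpr (Or.inr (Finset.mem_insert.mpr (Or.inl (Subtype.ext h))))
    · exact Finset.mem_insert.mpr (Or.inr (Finset.mem_insert.mpr
        (Or.inr (Finset.mem_singleton.mpr (Subtype.ext h)))))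
  have hlen : C.support.tail.length ≤ 3 := by
    rw [← List.toFinset_card_of_nodup htail]
    calc C.support.tail.toFinset.card ≤ _ := Finset.card_le_card hsubt
    _ ≤ 3 := by
      exact Finset.card_le_three
  have : C.support.tail.length = C.length := by
    rw [List.length_tail, Walk.length_support]
    omega
  omega
end Triangle
end EHF


namespace EHF

/-- parity potential -/
def gRaw (k : ℕ) : Raw → ℕ
  | .b i => i * k
  | .c i => i * k + 1
  | .p i j => i * k + j
  | .rp i j => i * k + k + 1 + j
  | .cb i j => (i + 1) * k + j

lemma zmod2_add_self (a : ZMod 2) : a + a = 0 := by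
  fin_cases a <;> decide

/-- edge weight: `1` exactly on the monochromatic (= `a_i b_i`) edges -/
def fE (k : ℕ) : Sym2 (Vk k) → ZMod 2 :=
  Sym2.lift ⟨fun x y => (gRaw k x.1 : ZMod 2) + (gRaw k y.1 : ZMod 2) + 1,
    fun x y => by ring⟩

lemma fE_mk {k : ℕ} (x y : Vk k) :
    fE k s(x, y) = (gRaw k x.1 : ZMod 2) + (gRaw k y.1 : ZMod 2) + 1 := rfl

/-- every `GkRel`-edge except `a_i b_i` has endpoints of different parity -/
lemma gk_parity {k : ℕ} (hk : 4 ≤ k) {x y : Raw} (hrel : GkRel k x y)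
    (hx : Valid k x) (hy : Valid k y) (hnab : ∀ i, ¬(x = .p i 0 ∧ y = .b i)) :
    (gRaw k x + gRaw k y) % 2 = 1 := by
  simp only [GkRel] at hrel
  rcases hrel with ⟨i',h1,h2⟩|⟨i',h1,h2⟩|⟨i',h1,h2⟩|⟨i',j',h1,h2⟩|⟨i',h1,h2⟩|
    ⟨i',j',h1,h2⟩|⟨i',h1,h2⟩|⟨i',h1,h2⟩|⟨i',j',h1,h2⟩|⟨i',h1,h2⟩
  · exact absurd ⟨h1, h2⟩ (hnab i')
  all_goals subst h1; subst h2; simp only [gRaw, Valid, add_mul, one_mul] at *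
  all_goals omega

lemma gk_parity_ab {k : ℕ} {i : ℕ} : (gRaw k (.p i 0) + gRaw k (.b i)) % 2 = 0 := by
  simp only [gRaw]
  omega

lemma natCast_parity_one {a b : ℕ} (h : (a + b) % 2 = 1) :
    (a : ZMod 2) + (b : ZMod 2) = 1 := by
  have : ((a + b : ℕ) : ZMod 2) = (((a + b) % 2 : ℕ) : ZMod 2) := (ZMod.natCast_mod _ _).symm
  rw [Nat.cast_add, h] at this
  simpa using this

lemma natCast_parity_zero {a b : ℕ} (h : (a + b) % 2 = 0) :
    (a : ZMod 2) + (b : ZMod 2) = 0 := by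
  have : ((a + b : ℕ) : ZMod 2) = (((a + b) % 2 : ℕ) : ZMod 2) := (ZMod.natCast_mod _ _).symm
  rw [Nat.cast_add, h] at this
  simpa using this

/-- telescoping parity sum along a walk -/
lemma tele {k : ℕ} {u w : Vk k} (W : (Gk k).Walk u w) :
    (W.edges.map (fE k)).sum =
      (gRaw k u.1 : ZMod 2) + (gRaw k w.1 : ZMod 2) + W.length := by
  induction W with
  | nil => simp [zmod2_add_self]
  | @cons a b c h W ih =>
    rw [Walk.edges_cons, List.map_cons, List.sum_cons, ih, fE_mk, Walk.length_cons]
    push_cast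
    have h2 : (gRaw k b.1 : ZMod 2) + (gRaw k b.1 : ZMod 2) = 0 := zmod2_add_self _
    linear_combination h2

lemma list_sum_eq_one {α : Type*} [DecidableEq α] (l : List α) (f : α → ZMod 2) (e0 : α)
    (he0 : e0 ∈ l) (hf : f e0 = 1) (hothers : ∀ e ∈ l, e ≠ e0 → f e = 0)
    (hnd : l.Nodup) : (l.map f).sum = 1 := by
  induction l with
  | nil => simp at he0
  | cons a t ih =>
    rw [List.nodup_cons] at hnd
    rcases List.mem_cons.mp he0 with rfl | hmem
    · rw [List.map_cons, List.sum_cons, hf]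
      have hz : (t.map f).sum = 0 := by
        apply List.sum_eq_zero
        intro x hx
        rw [List.mem_map] at hx
        obtain ⟨e, he, rfl⟩ := hx
        exact hothers e (List.mem_cons_of_mem _ he) (fun h => hnd.1 (h ▸ he))
      rw [hz, add_zero]
    · rw [List.map_cons, List.sum_cons,
        hothers a List.mem_cons_self (fun h => hnd.1 (h ▸ hmem)),
        ih hmem (fun e he hne => hothers e (List.mem_cons_of_mem _ he) hne) hnd.2, zero_add]
end EHF

open EHF

/-- for every `k ≥ 4`, the graph `G_k` contains no induced cycle of even
length. -/
theorem Gk_no_even_hole (k : ℕ) (hk : 4 ≤ k) :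
    ∀ (v : Vk k) (cyc : (Gk k).Walk v v), IsInducedCycle (Gk k) cyc →
      ¬ Even cyc.length := by
  intro v cyc hcyc heven
  classical
  by_cases htri : ∃ i, SS cyc (.p i 0) ∧ SS cyc (.b i) ∧ SS cyc (.c i)
  · obtain ⟨i, h1, h2, h3⟩ := htri
    have h3eq := triangle_case hcyc hk h1 h2 h3
    rw [h3eq] at heven
    exact (by decide : ¬ Even 3) heven
  · have hnt : NT cyc := fun i h => htri ⟨i, h⟩
    obtain ⟨i1, hi1⟩ := ex_ab hcyc hk hnt
    have hex : ∃ i, EE cyc (.p i 0) (.b i) := ⟨i1, hi1⟩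
    set i0 := Nat.find hex with hi0
    have h0 : EE cyc (.p i0 0) (.b i0) := Nat.find_spec hex
    have hmin : ∀ l, EE cyc (.p l 0) (.b l) → i0 ≤ l := fun l hl => Nat.find_min' hex hl
    obtain ⟨hva, hvb, hadj0⟩ := h0
    have h0' : EE cyc (.p i0 0) (.b i0) := ⟨hva, hvb, hadj0⟩
    set A : Vk k := ⟨.p i0 0, hva⟩ with hA
    set B : Vk k := ⟨.b i0, hvb⟩ with hB
    have hedge : s(A, B) ∈ cyc.edges :=
      (Walk.mem_edges_toSubgraph cyc).mp (Subgraph.mem_edgeSet.mpr hadj0)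
    have hf1 : fE k s(A, B) = 1 := by
      rw [fE_mk]
      have hz := natCast_parity_zero (gk_parity_ab (k := k) (i := i0))
      rw [hA, hB]
      rw [hz, zero_add]
    have hothers : ∀ e ∈ cyc.edges, e ≠ s(A, B) → fE k e = 0 := by
      intro e he hne
      induction e using Sym2.ind with
      | _ x y =>
        have hadj : cyc.toSubgraph.Adj x y :=
          Subgraph.mem_edgeSet.mp ((Walk.mem_edges_toSubgraph cyc).mpr he)
        have hEE : EE cyc x.1 y.1 := ⟨x.2, y.2, hadj⟩
        obtain ⟨hnexy, hrel | hrel⟩ := hEE.adjR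
        · by_cases hab : ∃ i, x.1 = .p i 0 ∧ y.1 = .b i
          · obtain ⟨i, hx1, hy1⟩ := hab
            exfalso
            apply hne
            have hEEab : EE cyc (.p i 0) (.b i) := by rw [← hx1, ← hy1]; exact hEE
            have hi : i = i0 := uniq_ab hcyc hk hnt h0' hmin hEEab
            subst hi
            rw [show x = A from Subtype.ext hx1, show y = B from Subtype.ext hy1]
          · have hpar := gk_parity hk hrel x.2 y.2 (fun i hi => hab ⟨i, hi⟩)
            rw [fE_mk, natCast_parity_one hpar]
            decide
        · by_cases hab : ∃ i, y.1 = .p i 0 ∧ x.1 = .b i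
          · obtain ⟨i, hy1, hx1⟩ := hab
            exfalso
            apply hne
            have hEEab : EE cyc (.p i 0) (.b i) := by rw [← hx1, ← hy1]; exact hEE.symm
            have hi : i = i0 := uniq_ab hcyc hk hnt h0' hmin hEEab
            subst hi
            rw [show x = B from Subtype.ext hx1, show y = A from Subtype.ext hy1]
            exact Sym2.eq_swap
          · have hpar := gk_parity hk hrel y.2 x.2 (fun i hi => hab ⟨i, hi⟩)
            have hpar' := natCast_parity_one hpar
            rw [add_comm] at hpar'
            rw [fE_mk, hpar']
            decide
    have hsum1 : (cyc.edges.map (fE k)).sum = 1 :=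
      list_sum_eq_one _ _ _ hedge hf1 hothers hcyc.1.isCircuit.isTrail.edges_nodup
    have hsum := tele cyc
    rw [hsum1, zmod2_add_self, zero_add] at hsum
    obtain ⟨r, hr⟩ := heven
    have hlen0 : ((cyc.length : ℕ) : ZMod 2) = 0 := by
      rw [hr]
      push_cast
      exact zmod2_add_self _
    rw [hlen0] at hsum
    exact (by decide : (1 : ZMod 2) ≠ 0) hsum
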